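/- Let L ≥ 2 be an integer, σ_b = 0, and x, x' ∈ ℝ^d nonzero. Then K^(L+1)(x,x') > 0 and Σ_{ℓ=1}^{L+1} ( ρ^ℓ(−1) / ρ^{L+1}(1) )·Π_{ℓ'=ℓ+1}^{L+1} ρ'( ρ^{ℓ'−1}(−1) ) ≤ Θ(x,x')/K^(L+1)(x,x') ≤ Σ_{ℓ=1}^{L+1} ( ρ^ℓ(1) / ρ^{L+1}(−1) )·Π_{ℓ'=ℓ+1}^{L+1} ρ'( ρ^{ℓ'−1}(1) ), where ρ^m denotes the m-fold iterate of ρ. -/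

import Mathlib

open Real

/-- The dual activation function of the scaled ReLU `φ(t) = √2·max(t,0)`. -/
noncomputable def rho (r : ℝ) : ℝ :=
  (1 / π) * (Real.sqrt (1 - r ^ 2) + (π - Real.arccos r) * r)

/-- The dual activation function of the derivative of the scaled ReLU. -/
noncomputable def rhoPrime (r : ℝ) : ℝ := (π - Real.arccos r) / π

/-- The depth-`ℓ` NNGP kernel `K^(ℓ)` of a ReLU network with bias variance `σb²`,
defined recursively by `K^(0)(v,w) = ⟪v,w⟫` and
`K^(ℓ)(v,w) = √(K^(ℓ−1)(v,v)·K^(ℓ−1)(w,w))·ρ(K^(ℓ−1)(v,w)/√(K^(ℓ−1)(v,v)·K^(ℓ−1)(w,w))) + σb²`. -/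
noncomputable def Kker (σb : ℝ) {d : ℕ} :
    ℕ → EuclideanSpace ℝ (Fin d) → EuclideanSpace ℝ (Fin d) → ℝ
  | 0, v, w => (inner ℝ v w : ℝ)
  | ℓ + 1, v, w =>
      Real.sqrt (Kker σb ℓ v v * Kker σb ℓ w w) *
        rho (Kker σb ℓ v w / Real.sqrt (Kker σb ℓ v v * Kker σb ℓ w w)) + σb ^ 2

/-- `u^(ℓ) = (‖x‖² + ℓσ_b²)·(‖x'‖² + ℓσ_b²)`, stated for the norms `a = ‖x‖`, `b = ‖x'‖`. -/
noncomputable def uFun (σb a b : ℝ) (ℓ : ℕ) : ℝ :=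
  (a ^ 2 + ℓ * σb ^ 2) * (b ^ 2 + ℓ * σb ^ 2)

/-- `K̇^(ℓ)(v,w) = ρ'( K^(ℓ−1)(v,w) / √(K^(ℓ−1)(v,v)·K^(ℓ−1)(w,w)) )` for `ℓ ≥ 1`
(the value at `ℓ = 0` is junk). -/
noncomputable def Kdot (σb : ℝ) {d : ℕ} :
    ℕ → EuclideanSpace ℝ (Fin d) → EuclideanSpace ℝ (Fin d) → ℝ
  | 0, _, _ => 1
  | ℓ + 1, v, w =>
      rhoPrime (Kker σb ℓ v w / Real.sqrt (Kker σb ℓ v v * Kker σb ℓ w w))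

/-- The neural tangent kernel of an `L`-hidden-layer ReLU network:
`Θ(x,x') = Σ_{ℓ=1}^{L+1} K^(ℓ)(x,x') · Π_{ℓ'=ℓ+1}^{L+1} K̇^(ℓ')(x,x')`. -/
noncomputable def ntk (σb : ℝ) {d : ℕ} (L : ℕ)
    (v w : EuclideanSpace ℝ (Fin d)) : ℝ :=
  ∑ ℓ ∈ Finset.Icc 1 (L + 1),
    Kker σb ℓ v w * ∏ ℓ' ∈ Finset.Icc (ℓ + 1) (L + 1), Kdot σb ℓ' v w

/- ### Auxiliary lemmas -/

lemma rho_one : rho 1 = 1 := by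
  have hπ := Real.pi_pos
  simp [rho, Real.arccos_one]

lemma rho_neg_one : rho (-1) = 0 := by
  simp [rho, Real.arccos_neg_one]

lemma rho_zero : rho 0 = 1 / π := by
  simp [rho, Real.arccos_zero]

lemma rhoPrime_one : rhoPrime 1 = 1 := by
  have hπ := Real.pi_pos
  simp [rhoPrime, Real.arccos_one]

lemma rhoPrime_nonneg (r : ℝ) : 0 ≤ rhoPrime r :=
  div_nonneg (by linarith [Real.arccos_le_pi r]) Real.pi_pos.le

lemma rhoPrime_le_one (r : ℝ) : rhoPrime r ≤ 1 := by
  rw [rhoPrime, div_le_one Real.pi_pos]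
  linarith [Real.arccos_nonneg r]

lemma rhoPrime_mono : Monotone rhoPrime := by
  intro r s h
  unfold rhoPrime
  rw [Real.arccos, Real.arccos]
  have h2 := Real.monotone_arcsin h
  gcongr

lemma rho_hasDerivAt {r : ℝ} (h1 : -1 < r) (h2 : r < 1) :
    HasDerivAt rho ((π - Real.arccos r) / π) r := by
  have hπ := Real.pi_pos
  have hs : 0 < 1 - r ^ 2 := by nlinarith
  have hsq : 0 < Real.sqrt (1 - r ^ 2) := Real.sqrt_pos.2 hs
  have h1' : HasDerivAt (fun t : ℝ => 1 - t ^ 2) (-(↑2 * r ^ 1)) r :=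
    (hasDerivAt_pow 2 r).const_sub 1
  have hsqrt : HasDerivAt (fun t : ℝ => Real.sqrt (1 - t ^ 2))
      ((-(↑2 * r ^ 1)) / (2 * Real.sqrt (1 - r ^ 2))) r := h1'.sqrt hs.ne'
  have harc : HasDerivAt (fun t : ℝ => π - Real.arccos t)
      (-(-(1 / Real.sqrt (1 - r ^ 2)))) r :=
    (Real.hasDerivAt_arccos (by linarith) (by linarith)).const_sub π
  have hmul : HasDerivAt (fun t : ℝ => (π - Real.arccos t) * t)
      (-(-(1 / Real.sqrt (1 - r ^ 2))) * r + (π - Real.arccos r) * 1) r :=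
    harc.mul (hasDerivAt_id r)
  have htot := (hsqrt.add hmul).const_mul (1 / π)
  have : HasDerivAt rho
      ((1/π) * ((-(↑2 * r ^ 1)) / (2 * Real.sqrt (1 - r ^ 2)) +
        (-(-(1 / Real.sqrt (1 - r ^ 2))) * r + (π - Real.arccos r) * 1))) r := htot
  convert this using 1
  field_simp
  ring

lemma rho_monotoneOn : MonotoneOn rho (Set.Icc (-1 : ℝ) 1) := by
  have hcont : ContinuousOn rho (Set.Icc (-1 : ℝ) 1) := by
    apply Continuous.continuousOn
    unfold rho
    exact continuous_const.mul
      ((Real.continuous_sqrt.comp (by fun_prop)).add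
        ((continuous_const.sub Real.continuous_arccos).mul continuous_id))
  apply monotoneOn_of_deriv_nonneg (convex_Icc _ _) hcont
  · intro t ht
    rw [interior_Icc] at ht
    exact (rho_hasDerivAt ht.1 ht.2).differentiableAt.differentiableWithinAt
  · intro t ht
    rw [interior_Icc] at ht
    rw [(rho_hasDerivAt ht.1 ht.2).deriv]
    exact div_nonneg (by linarith [Real.arccos_le_pi t]) Real.pi_pos.le

lemma rho_mem_Icc {r : ℝ} (h : r ∈ Set.Icc (-1 : ℝ) 1) : rho r ∈ Set.Icc (0 : ℝ) 1 := by
  constructor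
  · have := rho_monotoneOn (Set.left_mem_Icc.2 (by norm_num)) h h.1
    rwa [rho_neg_one] at this
  · have := rho_monotoneOn h (Set.right_mem_Icc.2 (by norm_num)) h.2
    rwa [rho_one] at this

lemma rho_iter_one (ℓ : ℕ) : rho^[ℓ] (1 : ℝ) = 1 :=
  Function.iterate_fixed rho_one ℓ

lemma rho_iter_neg_one_mem (ℓ : ℕ) : rho^[ℓ] (-1 : ℝ) ∈ Set.Icc (-1 : ℝ) 1 := by
  induction ℓ with
  | zero => simp
  | succ n ih =>
    rw [Function.iterate_succ_apply']
    have := rho_mem_Icc ih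
    exact ⟨by linarith [this.1], this.2⟩

lemma rho_iter_neg_one_nonneg (ℓ : ℕ) (h : 1 ≤ ℓ) : 0 ≤ rho^[ℓ] (-1 : ℝ) := by
  obtain ⟨m, rfl⟩ : ∃ m, ℓ = m + 1 := ⟨ℓ - 1, by omega⟩
  rw [Function.iterate_succ_apply']
  exact (rho_mem_Icc (rho_iter_neg_one_mem m)).1

lemma rho_iter_neg_one_pos (ℓ : ℕ) (h : 2 ≤ ℓ) : 0 < rho^[ℓ] (-1 : ℝ) := by
  obtain ⟨m, rfl⟩ : ∃ m, ℓ = m + 2 := ⟨ℓ - 2, by omega⟩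
  rw [Function.iterate_succ_apply']
  have hm := rho_iter_neg_one_mem (m + 1)
  have hm0 := rho_iter_neg_one_nonneg (m + 1) (by omega)
  have : rho 0 ≤ rho (rho^[m + 1] (-1 : ℝ)) :=
    rho_monotoneOn (by norm_num) hm hm0
  rw [rho_zero] at this
  have hπ := Real.pi_pos
  have : (0:ℝ) < 1 / π := by positivity
  linarith

/-- Sandwich: the iterates of a point of `[-1,1]` stay between the iterates of `-1` and `1`. -/
lemma rho_iter_sandwich {r0 : ℝ} (h : r0 ∈ Set.Icc (-1 : ℝ) 1) (ℓ : ℕ) :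
    rho^[ℓ] (-1 : ℝ) ≤ rho^[ℓ] r0 ∧ rho^[ℓ] r0 ∈ Set.Icc (-1 : ℝ) 1 := by
  induction ℓ with
  | zero => exact ⟨h.1, h⟩
  | succ n ih =>
    rw [Function.iterate_succ_apply', Function.iterate_succ_apply']
    refine ⟨rho_monotoneOn (rho_iter_neg_one_mem n) ih.2 ih.1, ?_⟩
    have := rho_mem_Icc ih.2
    exact ⟨by linarith [this.1], this.2⟩

lemma Kker_self {d : ℕ} (v : EuclideanSpace ℝ (Fin d)) (hv : v ≠ 0) (ℓ : ℕ) :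
    Kker 0 ℓ v v = ‖v‖ ^ 2 := by
  induction ℓ with
  | zero => simp only [Kker]; exact real_inner_self_eq_norm_sq v
  | succ n ih =>
    have hK : (0 : ℝ) < ‖v‖ ^ 2 := by
      have := norm_pos_iff.2 hv
      positivity
    simp only [Kker, ih]
    rw [Real.sqrt_mul_self hK.le, div_self hK.ne', rho_one]
    ring

lemma Kker_eq {d : ℕ} (x x' : EuclideanSpace ℝ (Fin d)) (hx : x ≠ 0) (hx' : x' ≠ 0) (ℓ : ℕ) :
    Kker 0 ℓ x x' = ‖x‖ * ‖x'‖ * rho^[ℓ] ((inner ℝ x x' : ℝ) / (‖x‖ * ‖x'‖)) := by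
  have hab : (0 : ℝ) < ‖x‖ * ‖x'‖ := mul_pos (norm_pos_iff.2 hx) (norm_pos_iff.2 hx')
  induction ℓ with
  | zero =>
    simp only [Kker, Function.iterate_zero, id_eq]
    field_simp
  | succ n ih =>
    simp only [Kker, ih, Kker_self x hx, Kker_self x' hx']
    rw [show ‖x‖ ^ 2 * ‖x'‖ ^ 2 = (‖x‖ * ‖x'‖) ^ 2 by ring,
      Real.sqrt_sq hab.le, mul_div_cancel_left₀ _ hab.ne',
      Function.iterate_succ_apply']
    ring

lemma Kdot_eq {d : ℕ} (x x' : EuclideanSpace ℝ (Fin d)) (hx : x ≠ 0) (hx' : x' ≠ 0) (ℓ : ℕ) :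
    Kdot 0 (ℓ + 1) x x' = rhoPrime (rho^[ℓ] ((inner ℝ x x' : ℝ) / (‖x‖ * ‖x'‖))) := by
  have hab : (0 : ℝ) < ‖x‖ * ‖x'‖ := mul_pos (norm_pos_iff.2 hx) (norm_pos_iff.2 hx')
  simp only [Kdot, Kker_eq x x' hx hx', Kker_self x hx, Kker_self x' hx']
  rw [show ‖x‖ ^ 2 * ‖x'‖ ^ 2 = (‖x‖ * ‖x'‖) ^ 2 by ring,
    Real.sqrt_sq hab.le, mul_div_cancel_left₀ _ hab.ne']

/-- Theorem A.15 (bias-free case `σ_b = 0`): for `L ≥ 2` and nonzero `x, x'`,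
`K^(L+1)(x,x') > 0` and
`Σ_{ℓ=1}^{L+1} (ρ^ℓ(−1)/ρ^{L+1}(1))·Π_{ℓ'=ℓ+1}^{L+1} ρ'(ρ^{ℓ'−1}(−1))
  ≤ Θ(x,x')/K^(L+1)(x,x')
  ≤ Σ_{ℓ=1}^{L+1} (ρ^ℓ(1)/ρ^{L+1}(−1))·Π_{ℓ'=ℓ+1}^{L+1} ρ'(ρ^{ℓ'−1}(1))`. -/
theorem ntk_div_Kker_bound_no_bias (L : ℕ) (hL : 2 ≤ L) {d : ℕ}
    (x x' : EuclideanSpace ℝ (Fin d)) (hx : x ≠ 0) (hx' : x' ≠ 0) :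
    0 < Kker (0 : ℝ) (L + 1) x x' ∧
    ∑ ℓ ∈ Finset.Icc 1 (L + 1),
        (rho^[ℓ] (-1) / rho^[L + 1] 1) *
          ∏ ℓ' ∈ Finset.Icc (ℓ + 1) (L + 1), rhoPrime (rho^[ℓ' - 1] (-1)) ≤
      ntk (0 : ℝ) L x x' / Kker (0 : ℝ) (L + 1) x x' ∧
    ntk (0 : ℝ) L x x' / Kker (0 : ℝ) (L + 1) x x' ≤
      ∑ ℓ ∈ Finset.Icc 1 (L + 1),
        (rho^[ℓ] 1 / rho^[L + 1] (-1)) *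
          ∏ ℓ' ∈ Finset.Icc (ℓ + 1) (L + 1), rhoPrime (rho^[ℓ' - 1] 1) := by
  have hπ := Real.pi_pos
  have hab : (0 : ℝ) < ‖x‖ * ‖x'‖ := mul_pos (norm_pos_iff.2 hx) (norm_pos_iff.2 hx')
  set r0 : ℝ := (inner ℝ x x' : ℝ) / (‖x‖ * ‖x'‖) with hr0def
  have hr0 : r0 ∈ Set.Icc (-1 : ℝ) 1 := by
    have h1 := abs_real_inner_le_norm x x'
    have h2 := abs_le.1 h1
    constructor
    · rw [hr0def, le_div_iff₀ hab]; linarith [h2.1]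
    · rw [hr0def, div_le_one hab]; exact h2.2
  -- abbreviations
  set r : ℕ → ℝ := fun ℓ => rho^[ℓ] r0 with hrdef
  have hsand : ∀ ℓ, rho^[ℓ] (-1 : ℝ) ≤ r ℓ ∧ r ℓ ∈ Set.Icc (-1 : ℝ) 1 :=
    fun ℓ => rho_iter_sandwich hr0 ℓ
  have hrle1 : ∀ ℓ, r ℓ ≤ 1 := fun ℓ => (hsand ℓ).2.2
  have hrnonneg : ∀ ℓ, 1 ≤ ℓ → 0 ≤ r ℓ := fun ℓ hℓ =>
    le_trans (rho_iter_neg_one_nonneg ℓ hℓ) (hsand ℓ).1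
  have hneg : (0 : ℝ) < rho^[L + 1] (-1) := rho_iter_neg_one_pos (L + 1) (by omega)
  have hRpos : (0 : ℝ) < r (L + 1) := lt_of_lt_of_le hneg (hsand (L + 1)).1
  have hKxy : ∀ ℓ, Kker (0 : ℝ) ℓ x x' = ‖x‖ * ‖x'‖ * r ℓ := fun ℓ => Kker_eq x x' hx hx' ℓ
  have hKpos : 0 < Kker (0 : ℝ) (L + 1) x x' := by
    rw [hKxy]; exact mul_pos hab hRpos
  refine ⟨hKpos, ?_, ?_⟩
  -- rewrite the ratio as a sum of simple terms
  all_goals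
    rw [ntk, hKxy (L + 1), Finset.sum_div]
  · -- lower bound
    apply Finset.sum_le_sum
    intro ℓ hℓ
    rw [Finset.mem_Icc] at hℓ
    have hprodeq : ∏ ℓ' ∈ Finset.Icc (ℓ + 1) (L + 1), Kdot (0 : ℝ) ℓ' x x'
        = ∏ ℓ' ∈ Finset.Icc (ℓ + 1) (L + 1), rhoPrime (r (ℓ' - 1)) := by
      apply Finset.prod_congr rfl
      intro ℓ' hℓ'
      rw [Finset.mem_Icc] at hℓ'
      obtain ⟨m, rfl⟩ : ∃ m, ℓ' = m + 1 := ⟨ℓ' - 1, by omega⟩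
      rw [Kdot_eq x x' hx hx']
      simp only [Nat.add_sub_cancel]
      rfl
    rw [hKxy ℓ, hprodeq, rho_iter_one, div_one]
    have hP_nonneg : 0 ≤ ∏ ℓ' ∈ Finset.Icc (ℓ + 1) (L + 1), rhoPrime (r (ℓ' - 1)) :=
      Finset.prod_nonneg fun i _ => rhoPrime_nonneg _
    have hQ_nonneg : 0 ≤ ∏ ℓ' ∈ Finset.Icc (ℓ + 1) (L + 1), rhoPrime (rho^[ℓ' - 1] (-1 : ℝ)) :=
      Finset.prod_nonneg fun i _ => rhoPrime_nonneg _
    have hQP : ∏ ℓ' ∈ Finset.Icc (ℓ + 1) (L + 1), rhoPrime (rho^[ℓ' - 1] (-1 : ℝ))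
        ≤ ∏ ℓ' ∈ Finset.Icc (ℓ + 1) (L + 1), rhoPrime (r (ℓ' - 1)) := by
      apply Finset.prod_le_prod (fun i _ => rhoPrime_nonneg _)
      intro i _
      exact rhoPrime_mono (hsand (i - 1)).1
    have hstep1 : rho^[ℓ] (-1 : ℝ) *
          ∏ ℓ' ∈ Finset.Icc (ℓ + 1) (L + 1), rhoPrime (rho^[ℓ' - 1] (-1 : ℝ))
        ≤ r ℓ * ∏ ℓ' ∈ Finset.Icc (ℓ + 1) (L + 1), rhoPrime (r (ℓ' - 1)) :=
      mul_le_mul (hsand ℓ).1 hQP hQ_nonneg (hrnonneg ℓ hℓ.1)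
    have hstep2 : r ℓ * ∏ ℓ' ∈ Finset.Icc (ℓ + 1) (L + 1), rhoPrime (r (ℓ' - 1))
        ≤ (‖x‖ * ‖x'‖ * r ℓ * ∏ ℓ' ∈ Finset.Icc (ℓ + 1) (L + 1), rhoPrime (r (ℓ' - 1))) /
          (‖x‖ * ‖x'‖ * r (L + 1)) := by
      rw [show ‖x‖ * ‖x'‖ * r ℓ * ∏ ℓ' ∈ Finset.Icc (ℓ + 1) (L + 1), rhoPrime (r (ℓ' - 1))
          = (‖x‖ * ‖x'‖) * (r ℓ * ∏ ℓ' ∈ Finset.Icc (ℓ + 1) (L + 1), rhoPrime (r (ℓ' - 1))) by ring,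
        show ‖x‖ * ‖x'‖ * r (L + 1) = (‖x‖ * ‖x'‖) * r (L + 1) by ring,
        mul_div_mul_left _ _ hab.ne']
      rw [le_div_iff₀ hRpos]
      apply mul_le_of_le_one_right (mul_nonneg (hrnonneg ℓ hℓ.1) hP_nonneg) (hrle1 (L + 1))
    exact le_trans hstep1 hstep2
  · -- upper bound
    apply Finset.sum_le_sum
    intro ℓ hℓ
    rw [Finset.mem_Icc] at hℓ
    have hprodeq : ∏ ℓ' ∈ Finset.Icc (ℓ + 1) (L + 1), Kdot (0 : ℝ) ℓ' x x'
        = ∏ ℓ' ∈ Finset.Icc (ℓ + 1) (L + 1), rhoPrime (r (ℓ' - 1)) := by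
      apply Finset.prod_congr rfl
      intro ℓ' hℓ'
      rw [Finset.mem_Icc] at hℓ'
      obtain ⟨m, rfl⟩ : ∃ m, ℓ' = m + 1 := ⟨ℓ' - 1, by omega⟩
      rw [Kdot_eq x x' hx hx']
      simp only [Nat.add_sub_cancel]
      rfl
    have hrhs : ∏ ℓ' ∈ Finset.Icc (ℓ + 1) (L + 1), rhoPrime (rho^[ℓ' - 1] (1 : ℝ)) = 1 := by
      apply Finset.prod_eq_one
      intro i _
      rw [rho_iter_one, rhoPrime_one]
    rw [hKxy ℓ, hprodeq, rho_iter_one, hrhs, mul_one]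
    have hP_nonneg : 0 ≤ ∏ ℓ' ∈ Finset.Icc (ℓ + 1) (L + 1), rhoPrime (r (ℓ' - 1)) :=
      Finset.prod_nonneg fun i _ => rhoPrime_nonneg _
    have hP_le_one : ∏ ℓ' ∈ Finset.Icc (ℓ + 1) (L + 1), rhoPrime (r (ℓ' - 1)) ≤ 1 :=
      Finset.prod_le_one (fun i _ => rhoPrime_nonneg _) (fun i _ => rhoPrime_le_one _)
    rw [show ‖x‖ * ‖x'‖ * r ℓ * ∏ ℓ' ∈ Finset.Icc (ℓ + 1) (L + 1), rhoPrime (r (ℓ' - 1))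
        = (‖x‖ * ‖x'‖) * (r ℓ * ∏ ℓ' ∈ Finset.Icc (ℓ + 1) (L + 1), rhoPrime (r (ℓ' - 1))) by ring,
      show ‖x‖ * ‖x'‖ * r (L + 1) = (‖x‖ * ‖x'‖) * r (L + 1) by ring,
      mul_div_mul_left _ _ hab.ne']
    apply div_le_div₀ zero_le_one ?_ hneg (hsand (L + 1)).1
    exact mul_le_one₀ (hrle1 ℓ) hP_nonneg hP_le_one
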